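/- The variance of the number X of isolated super-vertices in G(N,K,p) is V(X) = E[X] + ∑_{i,j=1}^r k_i k_j (1-p)^{i(n-i)+j(n-j)} ((1-p)^{-ij} - 1) − ∑_{i=1}^r k_i (1-p)^{2i(n-i)-i²}. -/

import Mathlib

open MeasureTheory ProbabilityTheory Filter Real
open scoped ENNReal Classical

abbrev EdgeIdx (N : ℕ) := {q : Fin N × Fin N // q.1 < q.2}

/-- The law of the random graph `G(N,K,p)`: each potential edge between the `k`-th and
`l`-th super-vertices (of sizes `size k`, `size l`) is present independently with
probability `1-(1-p)^(size k * size l)`. -/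
noncomputable def graphMeasure (N : ℕ) (size : Fin N → ℕ) (p : ℝ) :
    Measure (EdgeIdx N → Bool) :=
  Measure.pi fun e =>
    (PMF.bernoulli (1 - (1 - ENNReal.ofReal p) ^ (size e.1.1 * size e.1.2)).toNNReal
      (by rw [← ENNReal.coe_le_coe, ENNReal.coe_toNNReal (ne_top_of_le_ne_top ENNReal.one_ne_top tsub_le_self)]
          exact tsub_le_self)).toMeasure

/-- Super-vertex `k` is isolated in the configuration `ω`. -/
def Isolated {N : ℕ} (ω : EdgeIdx N → Bool) (k : Fin N) : Prop :=
  ∀ e : EdgeIdx N, (e.1.1 = k ∨ e.1.2 = k) → ω e = false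

/-- The number of isolated super-vertices. -/
noncomputable def numIsolated {N : ℕ} (ω : EdgeIdx N → Bool) : ℕ :=
  (Finset.univ.filter fun k => Isolated ω k).card

/-- The simple graph on super-vertices determined by a configuration `ω`. -/
def toGraph {N : ℕ} (ω : EdgeIdx N → Bool) : SimpleGraph (Fin N) where
  Adj k l := ∃ e : EdgeIdx N, ω e = true ∧
    ((e.1.1 = k ∧ e.1.2 = l) ∨ (e.1.1 = l ∧ e.1.2 = k))
  symm := by
    constructor
    intro k l h
    obtain ⟨e, he, hkl⟩ := h
    exact ⟨e, he, hkl.symm⟩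
  loopless := by
    constructor
    intro k h
    obtain ⟨e, _, hkl⟩ := h
    have h2 := e.2
    rcases hkl with ⟨ha, hb⟩ | ⟨ha, hb⟩ <;> rw [ha, hb] at h2 <;> exact lt_irrefl _ h2

/-- The super-vertices of `A` form a connected component of the graph. -/
def IsComponentOn {N : ℕ} (ω : EdgeIdx N → Bool) (A : Finset (Fin N)) : Prop :=
  ((toGraph ω).induce (A : Set (Fin N))).Connected ∧
  ∀ e : EdgeIdx N, ((e.1.1 ∈ A ∧ e.1.2 ∉ A) ∨ (e.1.1 ∉ A ∧ e.1.2 ∈ A)) → ω e = false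

/- ------------------  Auxiliary material  ------------------ -/

noncomputable def incident {N : ℕ} (k : Fin N) : Finset (EdgeIdx N) :=
  Finset.univ.filter fun e => e.1.1 = k ∨ e.1.2 = k

lemma mem_incident {N : ℕ} (k : Fin N) (e : EdgeIdx N) :
    e ∈ incident k ↔ (e.1.1 = k ∨ e.1.2 = k) := by simp [incident]

lemma sum_incident {N : ℕ} (size : Fin N → ℕ) (k : Fin N) :
    ∑ e ∈ incident k, size e.1.1 * size e.1.2 =
      size k * ((∑ v, size v) - size k) := by
  have h1 : ∑ e ∈ incident k, size e.1.1 * size e.1.2 =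
      ∑ l ∈ Finset.univ.erase k, size k * size l := by
    refine Finset.sum_bij' (fun e _ => if e.1.1 = k then e.1.2 else e.1.1)
      (fun l hl => ⟨(min l k, max l k),
        min_lt_max.2 (by simpa using (Finset.mem_erase.1 hl).1)⟩)
      ?_ ?_ ?_ ?_ ?_
    · intro e he
      rw [mem_incident] at he
      rcases he with h|h
      · simp only [h, if_pos rfl, Finset.mem_erase, Finset.mem_univ, and_true]
        intro hc; exact absurd (hc ▸ h ▸ e.2) (lt_irrefl _)
      · have hne : e.1.1 ≠ k := fun hc => absurd (h ▸ hc ▸ e.2) (lt_irrefl _)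
        simp [hne, Finset.mem_erase]
    · intro l hl
      rw [mem_incident]
      rcases le_total l k with h|h
      · right; exact max_eq_right h
      · left; exact min_eq_right h
    · intro e he
      rw [mem_incident] at he
      rcases he with h|h
      · have h2 : k < e.1.2 := h ▸ e.2
        refine Subtype.ext (Prod.ext ?_ ?_) <;> simp only [h, if_pos rfl]
        · exact min_eq_right h2.le
        · exact max_eq_left h2.le
      · have hne : e.1.1 ≠ k := fun hc => absurd (h ▸ hc ▸ e.2) (lt_irrefl _)
        have h2 : e.1.1 < k := h ▸ e.2
        refine Subtype.ext (Prod.ext ?_ ?_) <;> simp only [if_neg hne]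
        · exact min_eq_left h2.le
        · exact (max_eq_right h2.le).trans h.symm
    · intro l hl
      have hlk : l ≠ k := by simpa using (Finset.mem_erase.1 hl).1
      rcases lt_or_gt_of_ne hlk with h|h
      · have h1 : min l k = l := min_eq_left h.le
        dsimp only
        simp [h1, hlk]
      · have h1 : min l k = k := min_eq_right h.le
        dsimp only
        rw [if_pos h1]
        exact max_eq_left h.le
    · intro e he
      rw [mem_incident] at he
      rcases he with h|h
      · simp [h]
      · have hne : e.1.1 ≠ k := fun hc => absurd (h ▸ hc ▸ e.2) (lt_irrefl _)
        simp [h, hne, Nat.mul_comm]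
  rw [h1, ← Finset.mul_sum]
  congr 1
  have := Finset.add_sum_erase Finset.univ size (Finset.mem_univ k)
  omega

lemma incident_inter {N : ℕ} {k l : Fin N} (hkl : k ≠ l) :
    incident k ∩ incident l =
      {(⟨(min k l, max k l), min_lt_max.2 hkl⟩ : EdgeIdx N)} := by
  ext e
  simp only [Finset.mem_inter, mem_incident, Finset.mem_singleton]
  constructor
  · rintro ⟨h1|h1, h2|h2⟩
    · exact absurd (h1.symm.trans h2) hkl
    · have hlt : k < l := h1 ▸ h2 ▸ e.2
      refine Subtype.ext (Prod.ext ?_ ?_)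
      · exact h1.trans (min_eq_left hlt.le).symm
      · exact h2.trans (max_eq_right hlt.le).symm
    · have hlt : l < k := h2 ▸ h1 ▸ e.2
      refine Subtype.ext (Prod.ext ?_ ?_)
      · exact h2.trans (min_eq_right hlt.le).symm
      · exact h1.trans (max_eq_left hlt.le).symm
    · exact absurd (h1.symm.trans h2) (by simpa using hkl)
  · rintro rfl
    rcases le_total k l with h|h
    · exact ⟨Or.inl (min_eq_left h), Or.inr (max_eq_right h)⟩
    · exact ⟨Or.inr (max_eq_left h), Or.inl (min_eq_right h)⟩

lemma measure_allFalse (N : ℕ) (size : Fin N → ℕ) (p : ℝ) (hp0 : 0 ≤ p) (hp1 : p ≤ 1)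
    (T : Finset (EdgeIdx N)) :
    graphMeasure N size p {ω | ∀ e ∈ T, ω e = false} =
      ENNReal.ofReal ((1 - p) ^ (∑ e ∈ T, size e.1.1 * size e.1.2)) := by
  have hset : {ω : EdgeIdx N → Bool | ∀ e ∈ T, ω e = false} =
      Set.univ.pi (fun e => if e ∈ T then ({false} : Set Bool) else Set.univ) := by
    ext ω
    simp only [Set.mem_setOf_eq, Set.mem_pi, Set.mem_univ, forall_true_left]
    constructor
    · intro h e
      by_cases he : e ∈ T <;> simp [he, h e]
    · intro h e he
      have := h e
      simpa [he] using this
  rw [hset, graphMeasure, Measure.pi_pi]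
  have key : ∀ e : EdgeIdx N,
      (PMF.bernoulli (1 - (1 - ENNReal.ofReal p) ^ (size e.1.1 * size e.1.2)).toNNReal
        (by rw [← ENNReal.coe_le_coe, ENNReal.coe_toNNReal (ne_top_of_le_ne_top ENNReal.one_ne_top tsub_le_self)]
            exact tsub_le_self)).toMeasure
        (if e ∈ T then ({false} : Set Bool) else Set.univ)
      = if e ∈ T then ENNReal.ofReal ((1 - p) ^ (size e.1.1 * size e.1.2)) else 1 := by
    intro e
    by_cases he : e ∈ T
    · simp only [he, if_true]
      rw [PMF.toMeasure_apply_singleton _ _ (measurableSet_singleton _), PMF.bernoulli_apply]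
      have hle : (1 - ENNReal.ofReal p) ^ (size e.1.1 * size e.1.2) ≤ 1 :=
        pow_le_one' tsub_le_self _
      rw [cond_false, ENNReal.coe_sub, ENNReal.coe_one,
          ENNReal.coe_toNNReal (ne_top_of_le_ne_top ENNReal.one_ne_top tsub_le_self),
          ENNReal.sub_sub_cancel ENNReal.one_ne_top hle]
      rw [show (1 : ℝ≥0∞) - ENNReal.ofReal p = ENNReal.ofReal (1 - p) by
        rw [ENNReal.ofReal_sub _ hp0, ENNReal.ofReal_one]]
      rw [← ENNReal.ofReal_pow (by linarith)]
    · simp only [he, if_false]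
      exact measure_univ
  simp_rw [key]
  rw [Finset.prod_ite_mem, Finset.univ_inter,
    ← ENNReal.ofReal_prod_of_nonneg (fun i _ => pow_nonneg (by linarith) _),
    Finset.prod_pow_eq_pow_sum]

theorem variance_isolated (N r : ℕ) (size : Fin N → ℕ) (p : ℝ) (hp0 : 0 < p) (hp1 : p < 1)
    (hrange : ∀ v, size v ∈ Finset.Icc 1 r)
    (k : ℕ → ℕ) (hk : ∀ i, k i = (Finset.univ.filter fun v => size v = i).card)
    (n : ℕ) (hn : n = ∑ v, size v) :
    variance (fun ω => (numIsolated ω : ℝ)) (graphMeasure N size p) =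
      (∑ i ∈ Finset.Icc 1 r, (k i : ℝ) * (1 - p) ^ (i * (n - i)))
      + (∑ i ∈ Finset.Icc 1 r, ∑ j ∈ Finset.Icc 1 r,
          (k i : ℝ) * (k j : ℝ) * (1 - p) ^ (i * (n - i) + j * (n - j)) *
            ((1 - p) ^ (-((i * j : ℕ) : ℤ)) - 1))
      - ∑ i ∈ Finset.Icc 1 r,
          (k i : ℝ) * (1 - p) ^ ((2 * (i * (n - i)) : ℤ) - ((i : ℤ)) ^ 2) := by
  have h1p : (0:ℝ) < 1 - p := by linarith
  have h1p' : (1:ℝ) - p ≠ 0 := ne_of_gt h1p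
  set μ := graphMeasure N size p with hμ
  haveI : IsProbabilityMeasure μ := by rw [hμ]; unfold graphMeasure; infer_instance
  have hmeas : ∀ s : Set (EdgeIdx N → Bool), MeasurableSet s :=
    fun s => s.to_countable.measurableSet
  set A : Fin N → Set (EdgeIdx N → Bool) := fun v => {ω | Isolated ω v} with hA
  set X : (EdgeIdx N → Bool) → ℝ := fun ω => (numIsolated ω : ℝ) with hX
  set P : Fin N → ℝ := fun v => (1 - p) ^ (size v * (n - size v)) with hP
  -- event rewriting
  have hAset : ∀ v, A v = {ω | ∀ e ∈ incident v, ω e = false} := by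
    intro v; ext ω
    simp only [hA, Set.mem_setOf_eq, Isolated, mem_incident]
  have hPA : ∀ v, μ (A v) = ENNReal.ofReal (P v) := by
    intro v
    rw [hAset v, hμ, measure_allFalse N size p hp0.le hp1.le, sum_incident, ← hn]
  have hPAr : ∀ v, (μ (A v)).toReal = P v := by
    intro v; rw [hPA v, ENNReal.toReal_ofReal (pow_nonneg h1p.le _)]
  -- intersection measure
  have hQ : ∀ v w : Fin N, v ≠ w → (μ (A v ∩ A w)).toReal =
      P v * P w * (1 - p) ^ (-((size v * size w : ℕ) : ℤ)) := by
    intro v w hvw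
    have hset : A v ∩ A w = {ω | ∀ e ∈ incident v ∪ incident w, ω e = false} := by
      ext ω
      simp only [Set.mem_inter_iff, hAset, Set.mem_setOf_eq, Finset.mem_union]
      constructor
      · rintro ⟨h1, h2⟩ e (he|he)
        exacts [h1 e he, h2 e he]
      · intro h
        exact ⟨fun e he => h e (Or.inl he), fun e he => h e (Or.inr he)⟩
    rw [hset, hμ, measure_allFalse N size p hp0.le hp1.le,
      ENNReal.toReal_ofReal (pow_nonneg h1p.le _)]
    have hsum : (∑ e ∈ incident v ∪ incident w, size e.1.1 * size e.1.2)
        + (size v * size w)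
        = size v * (n - size v) + size w * (n - size w) := by
      have hu := Finset.sum_union_inter (s₁ := incident v) (s₂ := incident w)
        (f := fun e : EdgeIdx N => size e.1.1 * size e.1.2)
      rw [incident_inter hvw, Finset.sum_singleton] at hu
      have hminmax : size (min v w) * size (max v w) = size v * size w := by
        rcases le_total v w with h|h
        · rw [min_eq_left h, max_eq_right h]
        · rw [min_eq_right h, max_eq_left h, Nat.mul_comm]
      rw [hminmax] at hu
      rw [hu, sum_incident, sum_incident, ← hn]
    have hkey : (1 - p) ^ (∑ e ∈ incident v ∪ incident w, size e.1.1 * size e.1.2)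
        * (1 - p) ^ (size v * size w) = P v * P w := by
      rw [hP, ← pow_add, ← pow_add, hsum]
    rw [zpow_neg, zpow_natCast]
    field_simp
    linarith [hkey]
  -- X as sum of indicators
  have hXrw : ∀ ω, X ω = ∑ v, Set.indicator (A v) (fun _ => (1:ℝ)) ω := by
    intro ω
    rw [hX]
    simp only [numIsolated, Finset.card_filter, Nat.cast_sum]
    refine Finset.sum_congr rfl fun v _ => ?_
    by_cases h : Isolated ω v <;>
      simp [h, Set.indicator_apply, hA, Set.mem_setOf_eq]
  -- expectation
  have hEX : ∫ ω, X ω ∂μ = ∑ v, P v := by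
    simp_rw [hXrw]
    rw [integral_finset_sum _ (fun v _ => Integrable.of_finite)]
    refine Finset.sum_congr rfl fun v _ => ?_
    rw [integral_indicator_const (1:ℝ) (hmeas _), smul_eq_mul, mul_one, measureReal_def, hPAr]
  -- second moment
  have hEX2 : ∫ ω, (X ω)^2 ∂μ = ∑ v, ∑ w, (μ (A v ∩ A w)).toReal := by
    have hsq : ∀ ω, (X ω)^2 = ∑ v, ∑ w,
        Set.indicator (A v ∩ A w) (fun _ => (1:ℝ)) ω := by
      intro ω
      rw [hXrw, sq, Finset.sum_mul_sum]
      refine Finset.sum_congr rfl fun v _ => Finset.sum_congr rfl fun w _ => ?_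
      by_cases h1 : ω ∈ A v <;> by_cases h2 : ω ∈ A w <;>
        simp [Set.indicator_apply, h1, h2]
    simp_rw [hsq]
    rw [integral_finset_sum _ (fun v _ => Integrable.of_finite)]
    refine Finset.sum_congr rfl fun v _ => ?_
    rw [integral_finset_sum _ (fun w _ => Integrable.of_finite)]
    refine Finset.sum_congr rfl fun w _ => ?_
    rw [integral_indicator_const (1:ℝ) (hmeas _), smul_eq_mul, mul_one, measureReal_def]
  -- variance
  have hmem : MemLp X 2 μ := by
    refine (MemLp.of_bound
      (StronglyMeasurable.of_discrete : StronglyMeasurable X).aestronglyMeasurable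
      (N : ℝ) (Eventually.of_forall fun ω => ?_)).mono_exponent le_top
    rw [hX]
    simp only [Real.norm_natCast]
    exact_mod_cast (Finset.card_filter_le _ _).trans (by simp)
  have hvar : variance X μ = ∑ v, ∑ w, (μ (A v ∩ A w)).toReal - (∑ v, P v)^2 := by
    rw [variance_eq_sub hmem, ← hEX2, ← hEX]
    rfl
  -- replace Q by Qt plus diagonal correction
  set Qt : Fin N → Fin N → ℝ := fun v w =>
    P v * P w * (1 - p) ^ (-((size v * size w : ℕ) : ℤ)) with hQt
  have hsplit : ∀ v w : Fin N, (μ (A v ∩ A w)).toReal =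
      Qt v w + (if w = v then P v - Qt v v else 0) := by
    intro v w
    by_cases h : w = v
    · subst h
      rw [if_pos rfl, Set.inter_self, hPAr]
      ring
    · rw [if_neg h, hQ v w (fun hc => h hc.symm), add_zero]
  have hsum2 : ∑ v, ∑ w, (μ (A v ∩ A w)).toReal =
      ∑ v, ∑ w, Qt v w + (∑ v, (P v - Qt v v)) := by
    simp only [hsplit, Finset.sum_add_distrib, Finset.sum_ite_eq, Finset.sum_ite_eq', Finset.mem_univ,
      if_true]
  -- fiberwise helper
  have hfiber : ∀ F : ℕ → ℝ, ∑ v : Fin N, F (size v) =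
      ∑ i ∈ Finset.Icc 1 r, (k i : ℝ) * F i := by
    intro F
    rw [← Finset.sum_fiberwise_of_maps_to (fun v _ => hrange v) (fun v => F (size v))]
    refine Finset.sum_congr rfl fun i _ => ?_
    rw [Finset.sum_congr rfl (fun v hv => by
      rw [(Finset.mem_filter.1 hv).2]), Finset.sum_const, nsmul_eq_mul, hk i]
  -- final computation
  rw [hvar, hsum2]
  have e1 : ∑ v, (P v : ℝ) = ∑ i ∈ Finset.Icc 1 r, (k i : ℝ) * (1 - p) ^ (i * (n - i)) :=
    hfiber (fun i => (1 - p) ^ (i * (n - i)))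
  have e2 : (∑ v, P v)^2 = ∑ v, ∑ w, P v * P w := by
    rw [sq, Finset.sum_mul_sum]
  have e3 : ∑ v, ∑ w, Qt v w - ∑ v, ∑ w, P v * P w =
      ∑ i ∈ Finset.Icc 1 r, ∑ j ∈ Finset.Icc 1 r,
        (k i : ℝ) * (k j : ℝ) * (1 - p) ^ (i * (n - i) + j * (n - j)) *
          ((1 - p) ^ (-((i * j : ℕ) : ℤ)) - 1) := by
    rw [← Finset.sum_sub_distrib]
    simp_rw [← Finset.sum_sub_distrib]
    have : ∀ v w : Fin N, Qt v w - P v * P w =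
        (fun i j : ℕ => (1 - p) ^ (i * (n - i)) * (1 - p) ^ (j * (n - j)) *
          ((1 - p) ^ (-((i * j : ℕ) : ℤ)) - 1)) (size v) (size w) := by
      intro v w
      simp only [hQt, hP]
      ring
    simp_rw [this]
    rw [hfiber (fun i => ∑ w : Fin N, (1 - p) ^ (i * (n - i)) * (1 - p) ^ (size w * (n - size w)) *
          ((1 - p) ^ (-((i * size w : ℕ) : ℤ)) - 1))]
    refine Finset.sum_congr rfl fun i _ => ?_
    rw [hfiber (fun j => (1 - p) ^ (i * (n - i)) * (1 - p) ^ (j * (n - j)) *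
          ((1 - p) ^ (-((i * j : ℕ) : ℤ)) - 1)), Finset.mul_sum]
    refine Finset.sum_congr rfl fun j _ => ?_
    rw [pow_add]
    ring
  have hsle : ∀ v : Fin N, size v ≤ n := by
    intro v
    rw [hn]
    exact Finset.single_le_sum (fun w _ => Nat.zero_le _) (Finset.mem_univ v)
  have e4 : ∑ v, Qt v v = ∑ i ∈ Finset.Icc 1 r,
      (k i : ℝ) * (1 - p) ^ ((2 * (i * (n - i)) : ℤ) - ((i : ℤ)) ^ 2) := by
    have hform : ∀ v : Fin N, Qt v v =
        (fun i : ℕ => ((1 - p) ^ (i * (n - i)))^2 * ((1 - p) ^ (i * i))⁻¹) (size v) := by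
      intro v
      simp only [hQt, hP, zpow_neg, zpow_natCast, sq]
    simp_rw [hform]
    rw [hfiber (fun i => ((1 - p) ^ (i * (n - i)))^2 * ((1 - p) ^ (i * i))⁻¹)]
    refine Finset.sum_congr rfl fun i hi => ?_
    by_cases hki : k i = 0
    · simp [hki]
    congr 1
    have hvi : ∃ v : Fin N, size v = i := by
      have : (Finset.univ.filter fun v => size v = i).Nonempty := by
        rw [← Finset.card_pos, ← hk i]
        omega
      obtain ⟨v, hv⟩ := this
      exact ⟨v, (Finset.mem_filter.1 hv).2⟩
    obtain ⟨v, rfl⟩ := hvi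
    have hin : size v ≤ n := hsle v
    have h2 : ((2 * (size v * (n - size v) : ℕ) : ℕ) : ℤ)
        = 2 * ((size v : ℤ) * ((n : ℤ) - (size v : ℤ))) := by
      push_cast [Nat.cast_sub hin]
      ring
    have h3 : ((size v * size v : ℕ) : ℤ) = ((size v : ℤ))^2 := by push_cast; ring
    rw [← h2, ← h3, zpow_sub₀ h1p', zpow_natCast, zpow_natCast, two_mul, pow_add]
    rw [sq]
    field_simp
  rw [e2, Finset.sum_sub_distrib, e1, e4]
  linarith [e3]
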